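/- Each of the five holomorphic vector fields e1 = (1,0,0), e2 = (2z1, −z2, w), e3 = (−z1², z1 z2 − w, −z1 w), e4 = (0,1,z1), e5 = (0,0,1) on ℂ³ is tangent to the real hypersurface M = {Φ = 0}, where Φ(z1,z2,w) = (v − x2 y1)² + y1² y2² − y1; that is, for each k, the real vector field X_k associated to e_k satisfies X_k(Φ) = 0 at every point of M. -/

import Mathlib

open Complex

def e1 : ℂ × ℂ × ℂ → ℂ × ℂ × ℂ := fun _ => (1, 0, 0)
def e2 : ℂ × ℂ × ℂ → ℂ × ℂ × ℂ := fun p => (2 * p.1, -p.2.1, p.2.2)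
def e3 : ℂ × ℂ × ℂ → ℂ × ℂ × ℂ := fun p => (-(p.1 ^ 2), p.1 * p.2.1 - p.2.2, -(p.1 * p.2.2))
def e4 : ℂ × ℂ × ℂ → ℂ × ℂ × ℂ := fun p => (0, 1, p.1)
def e5 : ℂ × ℂ × ℂ → ℂ × ℂ × ℂ := fun _ => (0, 0, 1)

/-- The defining function `Φ = (v − x2 y1)² + y1² y2² − y1` of the hypersurface `M`,
where `z1 = x1 + i y1`, `z2 = x2 + i y2`, `w = u + i v`. -/
noncomputable def Φ : ℂ × ℂ × ℂ → ℝ := fun p =>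
  (p.2.2.im - p.2.1.re * p.1.im) ^ 2 + p.1.im ^ 2 * p.2.1.im ^ 2 - p.1.im

lemma key (p : ℂ × ℂ × ℂ) (q : ℂ × ℂ × ℂ) :
    fderiv ℝ Φ p q =
      2 * (p.2.2.im - p.2.1.re * p.1.im) *
        (q.2.2.im - q.2.1.re * p.1.im - p.2.1.re * q.1.im) +
      (2 * p.1.im * q.1.im * p.2.1.im ^ 2 + p.1.im ^ 2 * (2 * p.2.1.im * q.2.1.im)) -
      q.1.im := by
  have hy1 : HasFDerivAt (fun p : ℂ × ℂ × ℂ => p.1.im)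
      (Complex.imCLM.comp (ContinuousLinearMap.fst ℝ ℂ (ℂ × ℂ))) p :=
    (Complex.imCLM.hasFDerivAt).comp p (hasFDerivAt_fst)
  have hx2 : HasFDerivAt (fun p : ℂ × ℂ × ℂ => p.2.1.re)
      (Complex.reCLM.comp ((ContinuousLinearMap.fst ℝ ℂ ℂ).comp
        (ContinuousLinearMap.snd ℝ ℂ (ℂ × ℂ)))) p :=
    (Complex.reCLM.hasFDerivAt).comp p (hasFDerivAt_fst.comp p hasFDerivAt_snd)
  have hy2 : HasFDerivAt (fun p : ℂ × ℂ × ℂ => p.2.1.im)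
      (Complex.imCLM.comp ((ContinuousLinearMap.fst ℝ ℂ ℂ).comp
        (ContinuousLinearMap.snd ℝ ℂ (ℂ × ℂ)))) p :=
    (Complex.imCLM.hasFDerivAt).comp p (hasFDerivAt_fst.comp p hasFDerivAt_snd)
  have hv : HasFDerivAt (fun p : ℂ × ℂ × ℂ => p.2.2.im)
      (Complex.imCLM.comp ((ContinuousLinearMap.snd ℝ ℂ ℂ).comp
        (ContinuousLinearMap.snd ℝ ℂ (ℂ × ℂ)))) p :=
    (Complex.imCLM.hasFDerivAt).comp p (hasFDerivAt_snd.comp p hasFDerivAt_snd)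
  have hΦeq : Φ = fun p : ℂ × ℂ × ℂ =>
      (p.2.2.im - p.2.1.re * p.1.im) * (p.2.2.im - p.2.1.re * p.1.im) +
        (p.1.im * p.1.im) * (p.2.1.im * p.2.1.im) - p.1.im := by
    funext p; simp [Φ]; ring
  have hA := hv.sub (hx2.mul hy1)
  have H := ((hA.mul hA).add ((hy1.mul hy1).mul (hy2.mul hy2))).sub hy1
  rw [hΦeq, (show HasFDerivAt (fun p : ℂ × ℂ × ℂ =>
      (p.2.2.im - p.2.1.re * p.1.im) * (p.2.2.im - p.2.1.re * p.1.im) +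
        (p.1.im * p.1.im) * (p.2.1.im * p.2.1.im) - p.1.im) _ p from H).fderiv]
  simp [ContinuousLinearMap.comp_apply]
  ring

theorem stmt4 (p : ℂ × ℂ × ℂ) (hp : Φ p = 0) :
    fderiv ℝ Φ p (e1 p) = 0 ∧ fderiv ℝ Φ p (e2 p) = 0 ∧ fderiv ℝ Φ p (e3 p) = 0 ∧
    fderiv ℝ Φ p (e4 p) = 0 ∧ fderiv ℝ Φ p (e5 p) = 0 := by
  have hΦ : (p.2.2.im - p.2.1.re * p.1.im) ^ 2 + p.1.im ^ 2 * p.2.1.im ^ 2 - p.1.im = 0 := hp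
  refine ⟨?_, ?_, ?_, ?_, ?_⟩ <;>
    rw [key] <;>
    simp [e1, e2, e3, e4, e5, pow_two, Complex.mul_im, Complex.mul_re, Complex.sub_im,
      Complex.neg_im]
  · linear_combination 2 * hΦ
  · linear_combination (-2 * p.1.re) * hΦ
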